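/- arXiv:1310.1544 — 5 statements merged into one kernel-verified Lean document; each statement's English description precedes it below -/
import Mathlib

section
/- Let p be an odd prime and S a nondegenerate symmetric m×m matrix over F_p with m even. For any nonzero c in F_p, the number of row vectors x in F_p^m with x S xᵀ = c equals p^{m/2-1}(p^{m/2} - χ(S)), where χ(S) = legendreSym p ((-1)^{m/2} det S). -/
open Matrix Finset

lemma addChar_map_sum {A M : Type*} [AddCommMonoid A] [CommMonoid M] (ψ : AddChar A M)
    {ι : Type*} (s : Finset ι) (f : ι → A) : ψ (∑ i ∈ s, f i) = ∏ i ∈ s, ψ (f i) := by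
  classical
  induction s using Finset.induction_on with
  | empty => simp
  | insert _ _ h ih => rw [Finset.sum_insert h, Finset.prod_insert h, AddChar.map_add_eq_mul, ih]


lemma exists_diag {K : Type*} [Field K] [Invertible (2:K)] {m : ℕ}
    (S : Matrix (Fin m) (Fin m) K) (hS : Sᵀ = S) :
    ∃ (P : Matrix (Fin m) (Fin m) K) (w : Fin m → K),
      IsUnit P.det ∧ Pᵀ * S * P = Matrix.diagonal w := by
  have hsym : ∀ i j, S j i = S i j := fun i j => by conv_lhs => rw [← hS, Matrix.transpose_apply]
  have hsymm : (Matrix.toBilin' S).IsSymm := by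
    rw [LinearMap.BilinForm.isSymm_def]
    intro x y
    simp only [Matrix.toBilin'_apply, RingHom.id_apply]
    rw [Finset.sum_comm]
    refine Finset.sum_congr rfl fun i _ => Finset.sum_congr rfl fun j _ => ?_
    rw [hsym j i]; ring
  obtain ⟨v, hv⟩ := LinearMap.BilinForm.exists_orthogonal_basis (LinearMap.BilinForm.isSymm_iff.mp hsymm)
  have hrank : Module.finrank K (Fin m → K) = m := by
    simp [Module.finrank_pi]
  let v' : Module.Basis (Fin m) K (Fin m → K) := v.reindex (finCongr hrank)
  let P : Matrix (Fin m) (Fin m) K := (Pi.basisFun K (Fin m)).toMatrix ⇑v'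
  have hPe : ∀ k l, P k l = v' l k := by
    intro k l
    simp [P, Module.Basis.toMatrix_apply]
  haveI := Module.Basis.invertibleToMatrix (Pi.basisFun K (Fin m)) v'
  refine ⟨P, fun i => Matrix.toBilin' S (v' i) (v' i), Matrix.isUnit_det_of_invertible P, ?_⟩
  have key : ∀ i j, (Pᵀ * S * P) i j = Matrix.toBilin' S (v' i) (v' j) := by
    intro i j
    simp only [Matrix.mul_apply, Matrix.transpose_apply, Matrix.toBilin'_apply, hPe,
      Finset.sum_mul, Finset.mul_sum]
    rw [Finset.sum_comm]
  ext i j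
  rcases eq_or_ne i j with rfl | hij
  · rw [key, Matrix.diagonal_apply_eq]
  · rw [key, Matrix.diagonal_apply_ne _ hij]
    have h1 : v' i = v ((finCongr hrank).symm i) := v.reindex_apply _ _
    have h2 : v' j = v ((finCongr hrank).symm j) := v.reindex_apply _ _
    rw [h1, h2]
    exact hv (fun h => hij ((finCongr hrank).symm.injective h))

lemma card_congr_matrix {K : Type*} [Field K] [Fintype K] [DecidableEq K] {m : ℕ}
    (S P : Matrix (Fin m) (Fin m) K) (hP : IsUnit P.det) (c : K) :
    Fintype.card {x : Fin m → K // x ⬝ᵥ ((Pᵀ * S * P) *ᵥ x) = c}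
      = Fintype.card {x : Fin m → K // x ⬝ᵥ (S *ᵥ x) = c} := by
  haveI := P.invertibleOfIsUnitDet hP
  let e : (Fin m → K) ≃ (Fin m → K) :=
    { toFun := fun x => P *ᵥ x
      invFun := fun x => P⁻¹ *ᵥ x
      left_inv := fun x => by
        show P⁻¹ *ᵥ (P *ᵥ x) = x
        rw [Matrix.mulVec_mulVec, Matrix.nonsing_inv_mul _ hP, Matrix.one_mulVec]
      right_inv := fun x => by
        show P *ᵥ (P⁻¹ *ᵥ x) = x
        rw [Matrix.mulVec_mulVec, Matrix.mul_nonsing_inv _ hP, Matrix.one_mulVec] }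
  refine Fintype.card_congr (Equiv.subtypeEquiv e fun x => ?_)
  have he : e x = P *ᵥ x := rfl
  have : x ⬝ᵥ ((Pᵀ * S * P) *ᵥ x) = (P *ᵥ x) ⬝ᵥ (S *ᵥ (P *ᵥ x)) := by
    rw [Matrix.mul_assoc, ← Matrix.mulVec_mulVec, Matrix.dotProduct_mulVec,
      Matrix.vecMul_transpose, ← Matrix.mulVec_mulVec]
  rw [this, he]


variable {p : ℕ} [Fact p.Prime]

lemma ringChar_ne_two (hp : p ≠ 2) : ringChar (ZMod p) ≠ 2 := by
  rw [ZMod.ringChar_zmod_n]; exact hp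

lemma chi_ne_one (hp : p ≠ 2) :
    (quadraticChar (ZMod p)).ringHomComp (Int.castRingHom ℂ) ≠ 1 :=
  (MulChar.ringHomComp_ne_one_iff (Int.cast_injective)).mpr
    (quadraticChar_ne_one (ringChar_ne_two hp))

lemma sum_psi_sq (hp : p ≠ 2) (a : ZMod p) (ha : a ≠ 0) :
    ∑ u : ZMod p, ZMod.stdAddChar (a * u ^ 2) =
      ((quadraticChar (ZMod p)).ringHomComp (Int.castRingHom ℂ)) a *
        gaussSum ((quadraticChar (ZMod p)).ringHomComp (Int.castRingHom ℂ)) ZMod.stdAddChar := by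
  classical
  set χ := (quadraticChar (ZMod p)).ringHomComp (Int.castRingHom ℂ) with hχ
  set ψ : AddChar (ZMod p) ℂ := ZMod.stdAddChar with hψdef
  have hψ : ψ.IsPrimitive := ZMod.isPrimitive_stdAddChar p
  have h1 : ∑ u : ZMod p, ψ (a * u ^ 2) = ∑ s : ZMod p, (χ s + 1) * ψ (a * s) := by
    rw [← Fintype.sum_fiberwise (fun u : ZMod p => u ^ 2) (fun u => ψ (a * u ^ 2))]
    refine Finset.sum_congr rfl fun s _ => ?_
    have : ∀ u : {u : ZMod p // u ^ 2 = s}, ψ (a * (u : ZMod p) ^ 2) = ψ (a * s) :=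
      fun u => by rw [u.2]
    rw [Finset.sum_congr rfl fun u _ => this u, Finset.sum_const, Finset.card_univ,
      nsmul_eq_mul]
    congr 1
    have hcard := quadraticChar_card_sqrts (ringChar_ne_two hp) s
    have : (Fintype.card {u : ZMod p // u ^ 2 = s} : ℤ) = quadraticChar (ZMod p) s + 1 := by
      rw [← hcard, Set.toFinset_card]
      exact_mod_cast (Fintype.card_congr (Equiv.subtypeEquivRight fun _ => Iff.rfl)).symm
    have := congrArg (fun z : ℤ => (z : ℂ)) this
    push_cast at this
    rw [this]
    simp [hχ, MulChar.ringHomComp_apply]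
  rw [h1]
  simp_rw [add_mul, one_mul, Finset.sum_add_distrib]
  have h2 : ∑ s : ZMod p, ψ (a * s) = 0 := by
    have := AddChar.sum_mulShift (R := ZMod p) (R' := ℂ) a hψ
    rw [if_neg ha, Nat.cast_zero] at this
    rw [← this]
    exact Finset.sum_congr rfl fun s _ => by rw [mul_comm]
  have h3 : ∑ s : ZMod p, χ s * ψ (a * s) = χ a * gaussSum χ ψ := by
    have hg : χ a * gaussSum χ (AddChar.mulShift ψ a) = gaussSum χ ψ :=
      gaussSum_mulShift χ ψ (Units.mk0 a ha)
    have hsq : χ a * χ a = 1 := by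
      have h0 : quadraticChar (ZMod p) a * quadraticChar (ZMod p) a = 1 := by
        rw [← sq]; exact quadraticChar_sq_one ha
      simp only [hχ, MulChar.ringHomComp_apply, Int.coe_castRingHom, ← Int.cast_mul, h0,
        Int.cast_one]
    have : gaussSum χ (AddChar.mulShift ψ a) = ∑ s : ZMod p, χ s * ψ (a * s) := by
      simp [gaussSum, AddChar.mulShift_apply]
    rw [← this]
    have h4 := congrArg (fun z => χ a * z) hg
    rw [← mul_assoc, hsq, one_mul] at h4
    exact h4
  rw [h2, h3, add_zero]

lemma diag_count (hp : p ≠ 2) (m : ℕ) (hm : Even m) (hm0 : 0 < m)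
    (w : Fin m → ZMod p) (hw : ∀ i, w i ≠ 0) (c : ZMod p) (hc : c ≠ 0) :
    (p : ℂ) * (Fintype.card {x : Fin m → ZMod p // ∑ i, w i * x i ^ 2 = c}) =
      (p : ℂ) ^ m -
        ((quadraticChar (ZMod p) ((-1) ^ (m / 2) * ∏ i, w i) : ℤ) : ℂ) * (p : ℂ) ^ (m / 2) := by
  classical
  set χ := (quadraticChar (ZMod p)).ringHomComp (Int.castRingHom ℂ) with hχ
  set ψ : AddChar (ZMod p) ℂ := ZMod.stdAddChar with hψdef
  have hψ : ψ.IsPrimitive := ZMod.isPrimitive_stdAddChar p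
  have hχ1 : χ ≠ 1 :=
    (MulChar.ringHomComp_ne_one_iff Int.cast_injective).mpr
      (quadraticChar_ne_one (ringChar_ne_two hp))
  have hχq : χ.IsQuadratic := (quadraticChar_isQuadratic (ZMod p)).comp _
  have hcardZ : (Fintype.card (ZMod p) : ℂ) = (p : ℂ) := by rw [ZMod.card]
  set Q : (Fin m → ZMod p) → ZMod p := fun x => ∑ i, w i * x i ^ 2 with hQ
  set g := gaussSum χ ψ with hg
  have hsqχ : ∀ a : ZMod p, a ≠ 0 → χ a * χ a = 1 := by
    intro a ha
    have h0 : quadraticChar (ZMod p) a * quadraticChar (ZMod p) a = 1 := by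
      rw [← sq]; exact quadraticChar_sq_one ha
    simp only [hχ, MulChar.ringHomComp_apply, Int.coe_castRingHom, ← Int.cast_mul, h0,
      Int.cast_one]
  have hm2 : m / 2 * 2 = m := Nat.div_mul_cancel hm.two_dvd
  have hm2' : 2 * (m / 2) = m := by omega
  -- step 1: p * N = ∑ x, ∑ t, ψ (t * (Q x - c))
  have step1 : (p : ℂ) * (Fintype.card {x : Fin m → ZMod p // Q x = c}) =
      ∑ x : Fin m → ZMod p, ∑ t : ZMod p, ψ (t * (Q x - c)) := by
    have : ∀ x : Fin m → ZMod p, ∑ t : ZMod p, ψ (t * (Q x - c)) =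
        if Q x = c then (p : ℂ) else 0 := by
      intro x
      have := AddChar.sum_mulShift (R := ZMod p) (R' := ℂ) (Q x - c) hψ
      rw [this, ZMod.card]
      by_cases h : Q x = c
      · rw [if_pos (by rw [h, sub_self]), if_pos h]
      · rw [if_neg (fun hh => h (sub_eq_zero.mp hh)), if_neg h, Nat.cast_zero]
    simp_rw [this]
    rw [← Finset.sum_filter, Finset.sum_const, nsmul_eq_mul, Fintype.card_subtype, mul_comm]
  -- step 2: swap and factor
  have step2 : ∑ x : Fin m → ZMod p, ∑ t : ZMod p, ψ (t * (Q x - c)) =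
      ∑ t : ZMod p, (∑ x : Fin m → ZMod p, ψ (t * Q x)) * ψ (-(t * c)) := by
    rw [Finset.sum_comm]
    refine Finset.sum_congr rfl fun t _ => ?_
    rw [Finset.sum_mul]
    refine Finset.sum_congr rfl fun x _ => ?_
    rw [← AddChar.map_add_eq_mul]
    ring_nf
  -- inner sum for t ≠ 0
  have inner : ∀ t : ZMod p, t ≠ 0 → ∑ x : Fin m → ZMod p, ψ (t * Q x) =
      ((quadraticChar (ZMod p) ((-1) ^ (m / 2) * ∏ i, w i) : ℤ) : ℂ) * (p : ℂ) ^ (m / 2) := by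
    intro t ht
    have e1 : ∀ x : Fin m → ZMod p, ψ (t * Q x) = ∏ i, ψ ((t * w i) * x i ^ 2) := by
      intro x
      rw [hQ]
      simp only
      rw [Finset.mul_sum]
      rw [show (∑ i, t * (w i * x i ^ 2)) = ∑ i, (t * w i) * x i ^ 2 by
        exact Finset.sum_congr rfl fun i _ => by ring]
      exact addChar_map_sum ψ _ _
    simp_rw [e1]
    rw [← Fintype.prod_sum (fun i u => ψ ((t * w i) * u ^ 2))]
    have e2 : ∀ i : Fin m, ∑ u : ZMod p, ψ ((t * w i) * u ^ 2) = χ (t * w i) * g :=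
      fun i => sum_psi_sq hp _ (mul_ne_zero ht (hw i))
    rw [Finset.prod_congr rfl fun i _ => e2 i, Finset.prod_mul_distrib, Finset.prod_const,
      Finset.card_univ, Fintype.card_fin, ← map_prod]
    have e3 : ∏ i, (t * w i) = t ^ m * ∏ i, w i := by
      rw [Finset.prod_mul_distrib, Finset.prod_const, Finset.card_univ, Fintype.card_fin]
    have e4 : χ (t ^ m) = 1 := by
      rw [map_pow, ← hm2', pow_mul, sq, hsqχ t ht, one_pow]
    have e5 : g ^ m = χ ((-1) ^ (m / 2)) * (p:ℂ) ^ (m / 2) := by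
      rw [show g ^ m = (gaussSum χ ψ ^ 2) ^ (m / 2) from by rw [hg, ← pow_mul, hm2'],
        gaussSum_sq hχ1 hχq hψ, hcardZ, mul_pow, ← map_pow]
    rw [e3, _root_.map_mul, e4, one_mul, e5]
    have e6 : χ ((-1) ^ (m / 2)) * χ (∏ i, w i) = χ ((-1) ^ (m / 2) * ∏ i, w i) := by
      rw [_root_.map_mul]
    have e7 : χ ((-1) ^ (m / 2) * ∏ i, w i) =
        ((quadraticChar (ZMod p) ((-1) ^ (m / 2) * ∏ i, w i) : ℤ) : ℂ) := rfl
    rw [← mul_assoc, mul_comm (χ (∏ i, w i)), e6, e7]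
  -- t = 0 term
  have zero_term : (∑ x : Fin m → ZMod p, ψ ((0 : ZMod p) * Q x)) * ψ (-(0 * c)) =
      (p : ℂ) ^ m := by
    simp only [zero_mul, neg_zero, AddChar.map_zero_eq_one, mul_one]
    rw [Finset.sum_const, Finset.card_univ, nsmul_eq_mul, mul_one]
    rw [show Fintype.card (Fin m → ZMod p) = p ^ m by simp [ZMod.card]]
    push_cast
    rfl
  -- assemble
  rw [step1, step2]
  rw [← Finset.add_sum_erase _ _ (Finset.mem_univ (0 : ZMod p)), zero_term]
  have : ∑ t ∈ Finset.univ.erase (0 : ZMod p),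
      (∑ x : Fin m → ZMod p, ψ (t * Q x)) * ψ (-(t * c)) =
      ((quadraticChar (ZMod p) ((-1) ^ (m / 2) * ∏ i, w i) : ℤ) : ℂ) * (p : ℂ) ^ (m / 2) *
        ∑ t ∈ Finset.univ.erase (0 : ZMod p), ψ (t * (-c)) := by
    rw [Finset.mul_sum]
    refine Finset.sum_congr rfl fun t ht => ?_
    rw [inner t (Finset.mem_erase.mp ht).1]
    congr 1
    congr 1
    ring
  rw [this]
  have hsum0 : ∑ t ∈ Finset.univ.erase (0 : ZMod p), ψ (t * (-c)) = -1 := by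
    rw [Finset.sum_erase_eq_sub (Finset.mem_univ (0 : ZMod p))]
    have := AddChar.sum_mulShift (R := ZMod p) (R' := ℂ) (-c) hψ
    rw [if_neg (neg_ne_zero.mpr hc)] at this
    rw [this, zero_mul, AddChar.map_zero_eq_one, Nat.cast_zero, zero_sub]
  rw [hsum0]
  ring


/-- Lemma 5.1 (1.1), last clause: for `p` an odd prime, `S` a nondegenerate symmetric
`m × m` matrix over `F_p` with `m` even, and `c ≠ 0`, the number of row vectors `x`
with `x S xᵀ = c` equals `p^(m/2-1) (p^(m/2) - χ(S))` with
`χ(S) = ((-1)^(m/2) det S / p)`. -/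
theorem card_repr_even_rank (p m : ℕ) [Fact p.Prime] (hp : p ≠ 2) (hm : Even m)
    (hm0 : 0 < m) (S : Matrix (Fin m) (Fin m) (ZMod p)) (hS : Sᵀ = S)
    (hSdet : IsUnit S.det) (c : ZMod p) (hc : c ≠ 0) :
    (Fintype.card {x : Fin m → ZMod p // dotProduct x (S.mulVec x) = c} : ℤ) =
      (p : ℤ) ^ (m / 2 - 1) *
        ((p : ℤ) ^ (m / 2) - legendreSym p (((-1 : ZMod p) ^ (m / 2) * S.det).val)) := by
  classical
  obtain ⟨k, hk⟩ := id hm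
  have hj : m / 2 = (k - 1) + 1 := by omega
  have hmeq : m = ((k - 1) + 1) + ((k - 1) + 1) := by omega
  have hp0 : (p : ℤ) ≠ 0 := Int.natCast_ne_zero.mpr (Fact.out (p := p.Prime)).ne_zero
  have h2 : (2 : ZMod p) ≠ 0 := by
    intro h
    have h3 := (ZMod.natCast_eq_zero_iff 2 p).mp (by exact_mod_cast h)
    exact hp ((Nat.prime_dvd_prime_iff_eq Fact.out Nat.prime_two).mp h3)
  haveI : Invertible (2 : ZMod p) := invertibleOfNonzero h2
  obtain ⟨P, w, hP, hD⟩ := exists_diag S hS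
  -- counts agree
  have hcount1 : Fintype.card {x : Fin m → ZMod p // dotProduct x (S.mulVec x) = c}
      = Fintype.card {x : Fin m → ZMod p // x ⬝ᵥ ((Matrix.diagonal w) *ᵥ x) = c} := by
    rw [← card_congr_matrix S P hP c, hD]
  have hdiagform : ∀ x : Fin m → ZMod p,
      x ⬝ᵥ ((Matrix.diagonal w) *ᵥ x) = ∑ i, w i * x i ^ 2 := by
    intro x
    simp only [dotProduct, Matrix.mulVec_diagonal]
    exact Finset.sum_congr rfl fun i _ => by ring
  have hcount2 : Fintype.card {x : Fin m → ZMod p // x ⬝ᵥ ((Matrix.diagonal w) *ᵥ x) = c}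
      = Fintype.card {x : Fin m → ZMod p // ∑ i, w i * x i ^ 2 = c} :=
    Fintype.card_congr (Equiv.subtypeEquivRight fun x => by rw [hdiagform x])
  -- determinant relation
  have hdet : ∏ i, w i = S.det * P.det ^ 2 := by
    rw [← Matrix.det_diagonal, ← hD, Matrix.det_mul, Matrix.det_mul, Matrix.det_transpose]
    ring
  have hunit : IsUnit (∏ i, w i) := by
    rw [hdet]; exact hSdet.mul (hP.pow 2)
  have hw : ∀ i, w i ≠ 0 := by
    intro i h
    exact hunit.ne_zero (Finset.prod_eq_zero (Finset.mem_univ i) h)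
  -- quadratic character relation
  have hqc : quadraticChar (ZMod p) ((-1) ^ (m / 2) * ∏ i, w i)
      = quadraticChar (ZMod p) ((-1) ^ (m / 2) * S.det) := by
    rw [hdet, show ((-1 : ZMod p)) ^ (m / 2) * (S.det * P.det ^ 2)
        = (((-1) ^ (m / 2) * S.det)) * P.det ^ 2 from by ring, _root_.map_mul,
      quadraticChar_sq_one' hP.ne_zero, mul_one]
  set ε : ℤ := quadraticChar (ZMod p) ((-1) ^ (m / 2) * S.det) with hε
  set N : ℕ := Fintype.card {x : Fin m → ZMod p // ∑ i, w i * x i ^ 2 = c} with hN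
  have hdiag := diag_count hp m hm hm0 w hw c hc
  rw [hqc] at hdiag
  -- pass to ℤ
  have hz : (p : ℤ) * N = (p : ℤ) ^ m - ε * (p : ℤ) ^ (m / 2) := by
    have : (((p : ℤ) * N : ℤ) : ℂ) = (((p : ℤ) ^ m - ε * (p : ℤ) ^ (m / 2) : ℤ) : ℂ) := by
      push_cast
      exact_mod_cast hdiag
    exact_mod_cast this
  -- legendre symbol rewriting
  have hleg : legendreSym p (((-1 : ZMod p) ^ (m / 2) * S.det).val) = ε := by
    rw [hε, legendreSym]
    congr 1
    push_cast
    rw [ZMod.natCast_val, ZMod.cast_id]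
  rw [hcount1, hcount2, hleg]
  rw [hj] at hz ⊢
  rw [hmeq] at hz
  simp only [Nat.add_sub_cancel]
  apply mul_left_cancel₀ hp0
  rw [hz]
  ring
end

section
/- Let p be an odd prime and S a nondegenerate symmetric m×m matrix over F_p with m even. The number of row vectors x in F_p^m with x S xᵀ = 0 equals p^{m/2-1}(p^{m/2} - χ(S)) + p^{m/2} χ(S), where χ(S) = legendreSym p ((-1)^{m/2} det S). -/
open Matrix Finset

/-- Diagonalization of a nondegenerate symmetric matrix by congruence. -/
lemma exists_congr_diagonal (p m : ℕ) [Fact p.Prime] (hp : p ≠ 2)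
    (S : Matrix (Fin m) (Fin m) (ZMod p)) (hS : Sᵀ = S) :
    ∃ (P : Matrix (Fin m) (Fin m) (ZMod p)) (w : Fin m → ZMod p),
      IsUnit P.det ∧ Pᵀ * S * P = Matrix.diagonal w := by
  have h2 : (2 : ZMod p) ≠ 0 := by
    have : ringChar (ZMod p) ≠ 2 := by rw [ZMod.ringChar_zmod_n]; exact hp
    exact Ring.two_ne_zero this
  haveI : Invertible (2 : ZMod p) := invertibleOfNonzero h2
  set B := Matrix.toBilin' S with hB
  have hBsymm : B.IsSymm := by
    rw [LinearMap.BilinForm.isSymm_def]; intro x y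
    simp only [RingHom.id_apply, hB, Matrix.toBilin'_apply]
    rw [Finset.sum_comm]
    refine Finset.sum_congr rfl fun i _ => Finset.sum_congr rfl fun j _ => ?_
    rw [show S j i = S i j from by rw [← Matrix.transpose_apply S, hS]]
    ring
  obtain ⟨v0, hv0⟩ := LinearMap.BilinForm.exists_orthogonal_basis (LinearMap.BilinForm.isSymm_iff.mp hBsymm)
  let v : Module.Basis (Fin m) (ZMod p) (Fin m → ZMod p) :=
    v0.reindex (finCongr (Module.finrank_fin_fun (ZMod p)))
  have hv : ∀ i j, i ≠ j → B (v i) (v j) = 0 := by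
    intro i j hij
    have : (finCongr (Module.finrank_fin_fun (ZMod p))).symm i ≠
        (finCongr (Module.finrank_fin_fun (ZMod p))).symm j := fun h => hij (by
      simpa using congrArg (finCongr (Module.finrank_fin_fun (ZMod p))) h)
    simpa [v, Module.Basis.reindex_apply] using hv0 this
  refine ⟨(Pi.basisFun (ZMod p) (Fin m)).toMatrix v, fun i => B (v i) (v i), ?_, ?_⟩
  · haveI := (Pi.basisFun (ZMod p) (Fin m)).invertibleToMatrix v
    exact Matrix.isUnit_det_of_invertible _
  · have h1 : LinearMap.BilinForm.toMatrix (Pi.basisFun (ZMod p) (Fin m)) B = S := by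
      rw [BilinForm.toMatrix_basisFun, hB, LinearMap.BilinForm.toMatrix'_toBilin' S]
    have h2 := BilinForm.toMatrix_mul_basis_toMatrix (Pi.basisFun (ZMod p) (Fin m)) v B
    rw [h1] at h2
    rw [h2]
    ext i j
    rw [BilinForm.toMatrix_apply]
    by_cases hij : i = j
    · subst hij; simp [Matrix.diagonal_apply_eq]
    · rw [Matrix.diagonal_apply_ne _ hij]; exact hv i j hij

lemma sum_prod_pi {m : ℕ} {p : ℕ} [NeZero p] (f : Fin m → ZMod p → ℂ) :
    ∑ x : Fin m → ZMod p, ∏ i, f i (x i) = ∏ i, ∑ c, f i c := by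
  rw [Finset.prod_univ_sum, Fintype.piFinset_univ]

open AddChar in
/-- Sum of an additive character over values `a * c²`. -/
lemma sum_addChar_mul_sq (p : ℕ) [Fact p.Prime] (hp : p ≠ 2)
    (ψ : AddChar (ZMod p) ℂ) (hψ : ψ.IsPrimitive) {a : ZMod p} (ha : a ≠ 0) :
    ∑ c : ZMod p, ψ (a * c ^ 2) =
      ((quadraticChar (ZMod p) a : ℤ) : ℂ) *
        gaussSum ((quadraticChar (ZMod p)).ringHomComp (Int.castRingHom ℂ)) ψ := by
  classical
  have hchar : ringChar (ZMod p) ≠ 2 := by rw [ZMod.ringChar_zmod_n]; exact hp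
  set χ : MulChar (ZMod p) ℂ := (quadraticChar (ZMod p)).ringHomComp (Int.castRingHom ℂ) with hχ
  -- fiberwise sum over y = c^2
  have h1 : ∑ c : ZMod p, ψ (a * c ^ 2) =
      ∑ y : ZMod p, ∑ c ∈ Finset.univ.filter (fun c : ZMod p => c ^ 2 = y), ψ (a * y) := by
    rw [← Finset.sum_fiberwise Finset.univ (fun c : ZMod p => c ^ 2) (fun c => ψ (a * c ^ 2))]
    refine Finset.sum_congr rfl fun y _ => Finset.sum_congr rfl fun c hc => ?_
    rw [Finset.mem_filter] at hc
    rw [hc.2]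
  have h2 : ∀ y : ZMod p,
      ((Finset.univ.filter (fun c : ZMod p => c ^ 2 = y)).card : ℂ) =
        ((quadraticChar (ZMod p) y : ℤ) : ℂ) + 1 := by
    intro y
    have := quadraticChar_card_sqrts hchar y
    have hset : {x : ZMod p | x ^ 2 = y}.toFinset =
        Finset.univ.filter (fun c : ZMod p => c ^ 2 = y) := by
      ext c; simp
    rw [hset] at this
    exact_mod_cast congrArg (fun n : ℤ => (n : ℂ)) this
  have h3 : ∑ c : ZMod p, ψ (a * c ^ 2) =
      ∑ y : ZMod p, (((quadraticChar (ZMod p) y : ℤ) : ℂ) + 1) * ψ (a * y) := by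
    rw [h1]
    refine Finset.sum_congr rfl fun y _ => ?_
    rw [Finset.sum_const, ← h2 y, nsmul_eq_mul]
  rw [h3]
  simp only [add_mul, one_mul, Finset.sum_add_distrib]
  have h4 : ∑ y : ZMod p, ψ (a * y) = 0 := by
    have := AddChar.sum_mulShift a hψ
    simp only [if_neg ha] at this
    simpa [mul_comm] using this
  rw [h4, add_zero]
  -- the remaining sum is a Gauss sum for the shifted character
  have h5 : ∑ y : ZMod p, ((quadraticChar (ZMod p) y : ℤ) : ℂ) * ψ (a * y) =
      gaussSum χ (ψ.mulShift a) := by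
    refine Finset.sum_congr rfl fun y _ => ?_
    rw [AddChar.mulShift_apply]
    rfl
  rw [h5]
  -- use `gaussSum_mulShift` to remove the shift
  have haU : IsUnit a := isUnit_iff_ne_zero.mpr ha
  have h6 := gaussSum_mulShift χ ψ haU.unit
  have hχa : χ a * χ a = 1 := by
    have : quadraticChar (ZMod p) a * quadraticChar (ZMod p) a = 1 := by
      rw [← pow_two]; exact quadraticChar_sq_one ha
    have := congrArg (fun n : ℤ => (n : ℂ)) this
    push_cast at this
    simpa [hχ, MulChar.ringHomComp_apply] using this
  have h7 : χ a * gaussSum χ (ψ.mulShift a) = gaussSum χ ψ := by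
    simpa [IsUnit.unit_spec] using h6
  have : gaussSum χ (ψ.mulShift a) = χ a * gaussSum χ ψ := by
    have := congrArg (fun z => χ a * z) h7
    rw [← mul_assoc, hχa, one_mul] at this
    exact this
  rw [this]
  rfl

/-- The key character-sum computation for a diagonal form with nonzero entries. -/
lemma card_diag_count (p : ℕ) [Fact p.Prime] (hp : p ≠ 2) (m : ℕ) (hm : Even m)
    (w : Fin m → ZMod p) (hw : ∀ i, w i ≠ 0) :
    (Fintype.card {x : Fin m → ZMod p // ∑ i, w i * x i ^ 2 = 0} : ℂ) * p =
      (p : ℂ) ^ m + ((p : ℂ) - 1) *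
        ((quadraticChar (ZMod p) ((-1) ^ (m / 2) * ∏ i, w i) : ℤ) : ℂ) * (p : ℂ) ^ (m / 2) := by
  classical
  have hchar : ringChar (ZMod p) ≠ 2 := by rw [ZMod.ringChar_zmod_n]; exact hp
  obtain ⟨ψ, hψ⟩ : ∃ ψ : AddChar (ZMod p) ℂ, ψ.IsPrimitive :=
    ⟨_, AddChar.FiniteField.primitiveChar_to_Complex_isPrimitive (ZMod p)⟩
  set χ : MulChar (ZMod p) ℂ := (quadraticChar (ZMod p)).ringHomComp (Int.castRingHom ℂ) with hχ
  have hχ1 : χ ≠ 1 := by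
    rw [hχ, MulChar.ringHomComp_ne_one_iff (RingHom.injective_int (Int.castRingHom ℂ))]
    exact quadraticChar_ne_one hchar
  have hχq : χ.IsQuadratic := (quadraticChar_isQuadratic (ZMod p)).comp _
  set G := gaussSum χ ψ with hG
  set Q : (Fin m → ZMod p) → ZMod p := fun x => ∑ i, w i * x i ^ 2 with hQ
  -- the double sum
  have key : ∑ t : ZMod p, ∑ x : Fin m → ZMod p, ψ (t * Q x) =
      (Fintype.card {x : Fin m → ZMod p // Q x = 0} : ℂ) * p := by
    rw [Finset.sum_comm]
    have : ∀ x : Fin m → ZMod p, ∑ t : ZMod p, ψ (t * Q x) =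
        if Q x = 0 then (p : ℂ) else 0 := by
      intro x
      have := AddChar.sum_mulShift (Q x) hψ
      rw [ZMod.card] at this
      simpa using this
    rw [Finset.sum_congr rfl fun x _ => this x, ← Finset.sum_filter,
      Finset.sum_const, nsmul_eq_mul, Fintype.card_subtype]
  -- evaluate the sum the other way
  have split : ∑ t : ZMod p, ∑ x : Fin m → ZMod p, ψ (t * Q x) =
      (∑ x : Fin m → ZMod p, ψ (0 * Q x)) +
        ∑ t ∈ Finset.univ.erase (0 : ZMod p), ∑ x : Fin m → ZMod p, ψ (t * Q x) := by
    rw [← Finset.add_sum_erase _ _ (Finset.mem_univ (0 : ZMod p))]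
  have h0 : ∑ x : Fin m → ZMod p, ψ (0 * Q x) = (p : ℂ) ^ m := by
    simp [Fintype.card_pi, ZMod.card]
  have hnz : ∀ t : ZMod p, t ≠ 0 → ∑ x : Fin m → ZMod p, ψ (t * Q x) =
      ((quadraticChar (ZMod p) ((-1) ^ (m / 2) * ∏ i, w i) : ℤ) : ℂ) * (p : ℂ) ^ (m / 2) := by
    intro t ht
    have hfac : ∀ x : Fin m → ZMod p, ψ (t * Q x) = ∏ i, ψ ((t * w i) * (x i) ^ 2) := by
      intro x
      rw [hQ]
      simp only
      rw [Finset.mul_sum, addChar_map_sum]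
      exact Finset.prod_congr rfl fun i _ => by ring_nf
    calc ∑ x : Fin m → ZMod p, ψ (t * Q x)
        = ∑ x : Fin m → ZMod p, ∏ i, ψ ((t * w i) * (x i) ^ 2) :=
          Finset.sum_congr rfl fun x _ => hfac x
      _ = ∏ i, ∑ c : ZMod p, ψ ((t * w i) * c ^ 2) := sum_prod_pi (fun i c => ψ ((t * w i) * c ^ 2))
      _ = ∏ i, (((quadraticChar (ZMod p) (t * w i) : ℤ) : ℂ) * G) := by
          refine Finset.prod_congr rfl fun i _ => ?_
          exact sum_addChar_mul_sq p hp ψ hψ (mul_ne_zero ht (hw i))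
      _ = ((quadraticChar (ZMod p) ((-1) ^ (m / 2) * ∏ i, w i) : ℤ) : ℂ) * (p : ℂ) ^ (m / 2) := by
          obtain ⟨k, hk⟩ := hm
          have hk2 : m / 2 = k := by omega
          rw [Finset.prod_mul_distrib, Finset.prod_const, Finset.card_univ, Fintype.card_fin]
          have h1 : ∏ i, ((quadraticChar (ZMod p) (t * w i) : ℤ) : ℂ)
              = ((∏ i, quadraticChar (ZMod p) (t * w i) : ℤ) : ℂ) := by
            rw [Int.cast_prod]
          have h2 : ∏ i, quadraticChar (ZMod p) (t * w i)
              = quadraticChar (ZMod p) t ^ m * quadraticChar (ZMod p) (∏ i, w i) := by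
            simp only [_root_.map_mul]
            rw [Finset.prod_mul_distrib, Finset.prod_const, Finset.card_univ, Fintype.card_fin,
              ← map_prod]
          have h3 : quadraticChar (ZMod p) t ^ m = 1 := by
            rw [hk, ← two_mul, pow_mul, quadraticChar_sq_one ht, one_pow]
          have hG2 : G ^ 2 = ((quadraticChar (ZMod p) (-1) : ℤ) : ℂ) * (p : ℂ) := by
            have := gaussSum_sq hχ1 hχq hψ
            rw [ZMod.card] at this
            rw [hG, this]
            rfl
          have hGm : G ^ m = ((quadraticChar (ZMod p) ((-1) ^ k) : ℤ) : ℂ) * (p : ℂ) ^ k := by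
            rw [hk, ← two_mul, pow_mul, hG2, mul_pow]
            congr 1
            rw [map_pow, Int.cast_pow]
          rw [h1, h2, h3, one_mul, hGm, hk2, _root_.map_mul, Int.cast_mul]
          ring
  -- put everything together
  rw [← key, split, h0]
  rw [Finset.sum_congr rfl fun t ht => hnz t (Finset.ne_of_mem_erase ht)]
  rw [Finset.sum_const, Finset.card_erase_of_mem (Finset.mem_univ 0), Finset.card_univ,
    ZMod.card, nsmul_eq_mul]
  have hp1 : 1 ≤ p := (Fact.out : p.Prime).pos
  push_cast [Nat.cast_sub hp1]
  ring

/-- Lemma 5.1 (2), even case: for `p` an odd prime and `S` a nondegenerate symmetric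
`m × m` matrix over `F_p` with `m` even, the number of row vectors `x` with
`x S xᵀ = 0` equals `p^(m/2-1)(p^(m/2) - χ(S)) + p^(m/2) χ(S)`, where
`χ(S) = ((-1)^(m/2) det S / p)`. -/
theorem card_zero_repr_even_rank (p m : ℕ) [Fact p.Prime] (hp : p ≠ 2) (hm : Even m)
    (hm0 : 0 < m) (S : Matrix (Fin m) (Fin m) (ZMod p)) (hS : Sᵀ = S)
    (hSdet : IsUnit S.det) :
    (Fintype.card {x : Fin m → ZMod p // dotProduct x (S.mulVec x) = 0} : ℤ) =
      (p : ℤ) ^ (m / 2 - 1) *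
        ((p : ℤ) ^ (m / 2) - legendreSym p (((-1 : ZMod p) ^ (m / 2) * S.det).val)) +
      (p : ℤ) ^ (m / 2) * legendreSym p (((-1 : ZMod p) ^ (m / 2) * S.det).val) := by
  classical
  obtain ⟨P, w, hPdet, hD⟩ := exists_congr_diagonal p m hp S hS
  have hPn : P.det ≠ 0 := isUnit_iff_ne_zero.mp hPdet
  have hprodw : (∏ i, w i) = P.det ^ 2 * S.det := by
    have h := congrArg Matrix.det hD
    rw [Matrix.det_mul, Matrix.det_mul, Matrix.det_transpose, Matrix.det_diagonal] at h
    rw [← h]; ring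
  have hw : ∀ i, w i ≠ 0 := by
    have hne : (∏ i, w i) ≠ 0 := by
      rw [hprodw]
      exact mul_ne_zero (pow_ne_zero _ hPn) (isUnit_iff_ne_zero.mp hSdet)
    exact fun i => Finset.prod_ne_zero_iff.mp hne i (Finset.mem_univ i)
  -- transfer the count to the diagonal form
  have hcard : Fintype.card {x : Fin m → ZMod p // dotProduct x (S.mulVec x) = 0}
      = Fintype.card {x : Fin m → ZMod p // ∑ i, w i * x i ^ 2 = 0} := by
    have hQe : ∀ x : Fin m → ZMod p,
        dotProduct (P.mulVec x) (S.mulVec (P.mulVec x)) = ∑ i, w i * x i ^ 2 := by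
      intro x
      rw [Matrix.mulVec_mulVec, ← Matrix.vecMul_transpose, Matrix.dotProduct_mulVec,
        Matrix.vecMul_vecMul, ← Matrix.mul_assoc, hD]
      simp only [dotProduct, Matrix.vecMul_diagonal]
      exact Finset.sum_congr rfl fun i _ => by ring
    let e : (Fin m → ZMod p) ≃ (Fin m → ZMod p) :=
      { toFun := fun x => P.mulVec x
        invFun := fun y => P⁻¹.mulVec y
        left_inv := fun x => by
          show P⁻¹.mulVec (P.mulVec x) = x
          rw [Matrix.mulVec_mulVec, Matrix.nonsing_inv_mul _ hPdet, Matrix.one_mulVec]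
        right_inv := fun y => by
          show P.mulVec (P⁻¹.mulVec y) = y
          rw [Matrix.mulVec_mulVec, Matrix.mul_nonsing_inv _ hPdet, Matrix.one_mulVec] }
    refine Fintype.card_congr (Equiv.subtypeEquiv e fun x => ?_).symm
    rw [show e x = P.mulVec x from rfl, hQe x]
  -- transfer the discriminant
  have hdisc : quadraticChar (ZMod p) ((-1) ^ (m / 2) * ∏ i, w i)
      = quadraticChar (ZMod p) ((-1) ^ (m / 2) * S.det) := by
    rw [hprodw, show ((-1 : ZMod p) ^ (m / 2) * (P.det ^ 2 * S.det))
        = P.det ^ 2 * ((-1) ^ (m / 2) * S.det) from by ring,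
      _root_.map_mul, quadraticChar_sq_one' hPn, one_mul]
  -- identify the Legendre symbol
  have hleg : legendreSym p (((-1 : ZMod p) ^ (m / 2) * S.det).val)
      = quadraticChar (ZMod p) ((-1 : ZMod p) ^ (m / 2) * S.det) := by
    have h1 : legendreSym p (((-1 : ZMod p) ^ (m / 2) * S.det).val)
        = quadraticChar (ZMod p)
            (((((-1 : ZMod p) ^ (m / 2) * S.det).val : ℕ) : ℤ) : ZMod p) := rfl
    rw [h1]
    congr 1
    push_cast
    simp [ZMod.natCast_val, ZMod.cast_id]
  -- the key identity over ℤ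
  have hC := card_diag_count p hp m hm w hw
  rw [← hcard, hdisc] at hC
  have hZ : (Fintype.card {x : Fin m → ZMod p // dotProduct x (S.mulVec x) = 0} : ℤ) * p
      = (p : ℤ) ^ m + ((p : ℤ) - 1) * (quadraticChar (ZMod p) ((-1) ^ (m / 2) * S.det) : ℤ)
          * (p : ℤ) ^ (m / 2) := by
    have hp1 : 1 ≤ p := (Fact.out : p.Prime).pos
    exact_mod_cast hC
  rw [hleg]
  obtain ⟨k, hk⟩ := hm
  have hp0 : (p : ℤ) ≠ 0 := Int.natCast_ne_zero.mpr (Fact.out : p.Prime).pos.ne'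
  have hg : (p : ℤ) ^ (m / 2 - 1) * p = (p : ℤ) ^ (m / 2) := by
    rw [← pow_succ]
    congr 1
    clear hC hZ hleg hdisc hcard hprodw hw hD hS; omega
  have hmm : (p : ℤ) ^ m = (p : ℤ) ^ (m / 2) * (p : ℤ) ^ (m / 2) := by
    rw [← pow_add]
    congr 1
    clear hC hZ hleg hdisc hcard hprodw hw hD hS; omega
  apply mul_right_cancel₀ hp0
  rw [hZ, hmm, ← hg]
  ring
end

section
/- Let p be an odd prime, η a multiplicative character of F_p with η(0)=0 and η² nontrivial, and l an odd integer ≥ 1. For Z₁ a symmetric (l-1)×(l-1) matrix over F_p and z ∈ F_p, the sum over w ∈ F_p^{l-1} of η(det [[Z₁, w],[wᵀ, z]]) equals p^{(l-1)/2} · φ((-1)^{(l-1)/2} det Z₁) · η(det Z₁ · z), where φ is the quadratic character. -/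
open Matrix

/-- The quadratic character of `ZMod p` with values in `ℂ`. -/
noncomputable def quadCharC (p : ℕ) [Fact p.Prime] : MulChar (ZMod p) ℂ :=
  (quadraticChar (ZMod p)).ringHomComp (Int.castRingHom ℂ)

namespace CharSumAux

open Finset

variable {p : ℕ} [Fact p.Prime]

lemma ringChar_ne_two (hp : p ≠ 2) : ringChar (ZMod p) ≠ 2 := by
  rw [ZMod.ringChar_zmod_n]; exact hp

lemma quadCharC_apply (a : ZMod p) :
    quadCharC p a = ((quadraticChar (ZMod p) a : ℤ) : ℂ) := rfl

lemma quadCharC_ne_one (hp : p ≠ 2) : quadCharC p ≠ 1 := by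
  rw [quadCharC, MulChar.ringHomComp_ne_one_iff (by exact_mod_cast Int.cast_injective)]
  exact quadraticChar_ne_one (ringChar_ne_two hp)

lemma quadCharC_sq_one' (hp : p ≠ 2) {a : ZMod p} (ha : a ≠ 0) :
    quadCharC p (a ^ 2) = 1 := by
  rw [quadCharC_apply, quadraticChar_sq_one' ha]; norm_num

lemma quadCharC_inv (hp : p ≠ 2) (a : ZMod p) :
    quadCharC p a⁻¹ = quadCharC p a := by
  rcases eq_or_ne a 0 with rfl | ha
  · rw [_root_.inv_zero]
  · have h1 : quadCharC p a⁻¹ * quadCharC p a = 1 := by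
      rw [← _root_.map_mul, inv_mul_cancel₀ ha, _root_.map_one]
    have h2 : quadCharC p a * quadCharC p a = 1 := by
      rw [← _root_.map_mul, ← sq]; exact quadCharC_sq_one' hp ha
    calc quadCharC p a⁻¹ = quadCharC p a⁻¹ * (quadCharC p a * quadCharC p a) := by
          rw [h2, mul_one]
      _ = (quadCharC p a⁻¹ * quadCharC p a) * quadCharC p a := by ring
      _ = quadCharC p a := by rw [h1, one_mul]

/-- Shifted sum of a nontrivial character vanishes. -/
lemma sum_shift (η : MulChar (ZMod p) ℂ) (hη : η ≠ 1) (β : ZMod p) :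
    ∑ v : ZMod p, η (β - v) = 0 := by
  have := Fintype.sum_equiv (Equiv.subLeft β) (fun v => η (β - v)) (fun v => η v)
    (fun v => rfl)
  rw [← MulChar.sum_eq_zero_of_ne_one hη]
  calc ∑ v : ZMod p, η (β - v) = ∑ v : ZMod p, η (β - v) := rfl
    _ = ∑ v : ZMod p, η v := this

lemma sq_expand (hp : p ≠ 2) (f : ZMod p → ℂ) :
    ∑ x : ZMod p, f (x ^ 2) = ∑ t : ZMod p, (1 + quadCharC p t) * f t := by
  classical
  rw [← Finset.sum_fiberwise univ (fun x : ZMod p => x ^ 2) (fun x => f (x ^ 2))]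
  refine Finset.sum_congr rfl fun t _ => ?_
  have h1 : ∀ x ∈ univ.filter (fun x : ZMod p => x ^ 2 = t), f (x ^ 2) = f t := by
    intro x hx
    rw [(Finset.mem_filter.mp hx).2]
  rw [Finset.sum_congr rfl h1, Finset.sum_const, nsmul_eq_mul]
  have h2 := quadraticChar_card_sqrts (ringChar_ne_two hp) t
  have h3 : ({x : ZMod p | x ^ 2 = t}).toFinset = univ.filter (fun x : ZMod p => x ^ 2 = t) := by
    ext x; simp
  rw [h3] at h2
  have h4 : ((univ.filter (fun x : ZMod p => x ^ 2 = t)).card : ℂ)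
      = 1 + quadCharC p t := by
    have : (((univ.filter (fun x : ZMod p => x ^ 2 = t)).card : ℤ) : ℂ)
        = ((quadraticChar (ZMod p) t + 1 : ℤ) : ℂ) := congrArg (fun n : ℤ => (n : ℂ)) h2
    push_cast at this
    rw [quadCharC_apply]
    push_cast
    rw [this]; ring
  rw [h4]


lemma K_eval (hp : p ≠ 2) {s : ZMod p} (hs : s ≠ 0) :
    ∑ u : ZMod p, quadCharC p u * quadCharC p (s - u) = -quadCharC p (-1) := by
  classical
  have key : ∀ u : ZMod p, u ≠ 0 →
      quadCharC p u * quadCharC p (s - u) = quadCharC p (s * u⁻¹ - 1) := by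
    intro u hu
    have h : u * (s - u) = u ^ 2 * (s * u⁻¹ - 1) := by
      field_simp
    rw [← _root_.map_mul, h, _root_.map_mul, quadCharC_sq_one' hp hu, one_mul]
  rw [← Finset.sum_erase_add univ _ (Finset.mem_univ (0 : ZMod p))]
  have h0 : quadCharC p 0 * quadCharC p (s - 0) = 0 := by
    rw [MulChar.map_zero, zero_mul]
  rw [h0, add_zero]
  have h1 : ∑ u ∈ univ.erase (0 : ZMod p), quadCharC p u * quadCharC p (s - u)
      = ∑ u ∈ univ.erase (0 : ZMod p), quadCharC p (s * u⁻¹ - 1) :=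
    Finset.sum_congr rfl fun u hu => key u (Finset.mem_erase.mp hu).1
  rw [h1]
  have h2 : ∑ u ∈ univ.erase (0 : ZMod p), quadCharC p (s * u⁻¹ - 1)
      = ∑ v ∈ univ.erase (0 : ZMod p), quadCharC p (v - 1) := by
    refine Finset.sum_nbij' (fun u => s * u⁻¹) (fun v => s * v⁻¹) ?_ ?_ ?_ ?_ ?_
    · intro u hu
      rcases Finset.mem_erase.mp hu with ⟨hu0, -⟩
      exact Finset.mem_erase.mpr ⟨mul_ne_zero hs (inv_ne_zero hu0), Finset.mem_univ _⟩
    · intro v hv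
      rcases Finset.mem_erase.mp hv with ⟨hv0, -⟩
      exact Finset.mem_erase.mpr ⟨mul_ne_zero hs (inv_ne_zero hv0), Finset.mem_univ _⟩
    · intro u hu
      rcases Finset.mem_erase.mp hu with ⟨hu0, -⟩
      field_simp
    · intro v hv
      rcases Finset.mem_erase.mp hv with ⟨hv0, -⟩
      field_simp
    · intro u hu; rfl
  rw [h2, Finset.sum_erase_eq_sub (Finset.mem_univ (0 : ZMod p))]
  have h3 : ∑ v : ZMod p, quadCharC p (v - 1) = 0 := by
    have := Fintype.sum_equiv (Equiv.subRight (1 : ZMod p))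
      (fun v => quadCharC p (v - 1)) (fun v => quadCharC p v) (fun v => rfl)
    rw [this]
    exact MulChar.sum_eq_zero_of_ne_one (quadCharC_ne_one hp)
  rw [h3, zero_sub, zero_sub]

lemma J_eval (hp : p ≠ 2) (η : MulChar (ZMod p) ℂ) (hη : η ≠ 1) (α : ZMod p) :
    ∑ u : ZMod p, ∑ v : ZMod p, quadCharC p u * quadCharC p v * η (α - u - v)
      = (p : ℂ) * quadCharC p (-1) * η α := by
  classical
  have step1 : ∀ u : ZMod p,
      ∑ v : ZMod p, quadCharC p u * quadCharC p v * η (α - u - v)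
        = ∑ s : ZMod p, quadCharC p u * quadCharC p (s - u) * η (α - s) := by
    intro u
    refine (Fintype.sum_equiv (Equiv.subRight u)
      (fun s => quadCharC p u * quadCharC p (s - u) * η (α - s))
      (fun v => quadCharC p u * quadCharC p v * η (α - u - v)) ?_).symm
    intro s
    have h : α - u - (s - u) = α - s := by ring
    simp only [Equiv.subRight_apply]
    rw [h]
  rw [Finset.sum_congr rfl fun u _ => step1 u, Finset.sum_comm]
  have step2 : ∀ s : ZMod p,
      ∑ u : ZMod p, quadCharC p u * quadCharC p (s - u) * η (α - s)
        = (∑ u : ZMod p, quadCharC p u * quadCharC p (s - u)) * η (α - s) := by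
    intro s; rw [Finset.sum_mul]
  rw [Finset.sum_congr rfl fun s _ => step2 s,
    ← Finset.sum_erase_add univ _ (Finset.mem_univ (0 : ZMod p))]
  have hzero : (∑ u : ZMod p, quadCharC p u * quadCharC p (0 - u)) * η (α - 0)
      = quadCharC p (-1) * ((p : ℂ) - 1) * η α := by
    have e1 : ∀ u : ZMod p, quadCharC p u * quadCharC p (0 - u)
        = quadCharC p (-1) * quadCharC p (u ^ 2) := by
      intro u
      rw [zero_sub, show -u = (-1 : ZMod p) * u by ring, _root_.map_mul]
      rw [show (u:ZMod p) ^ 2 = u * u from sq u, _root_.map_mul]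
      ring
    rw [Finset.sum_congr rfl fun u _ => e1 u, ← Finset.mul_sum]
    have e2 : ∑ u : ZMod p, quadCharC p (u ^ 2) = (p : ℂ) - 1 := by
      have e3 : ∀ u : ZMod p, quadCharC p (u ^ 2) = if u = 0 then 0 else 1 := by
        intro u
        by_cases hu : u = 0
        · simp [hu, MulChar.map_zero]
        · rw [quadCharC_sq_one' hp hu, if_neg hu]
      rw [Finset.sum_congr rfl fun u _ => e3 u, Finset.sum_ite, Finset.sum_const,
        Finset.sum_const, smul_zero, zero_add, nsmul_eq_mul, mul_one]
      have hfe : (univ.filter (fun u : ZMod p => ¬u = 0)) = univ.erase 0 := by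
        ext x; simp [Finset.mem_erase, and_comm]
      rw [hfe, Finset.card_erase_of_mem (Finset.mem_univ _), Finset.card_univ, ZMod.card]
      have hp1 : 1 ≤ p := (Fact.out : p.Prime).one_lt.le
      push_cast [Nat.cast_sub hp1]
      ring
    rw [e2, sub_zero]
  have hrest : ∑ s ∈ univ.erase (0 : ZMod p),
      (∑ u : ZMod p, quadCharC p u * quadCharC p (s - u)) * η (α - s)
      = -quadCharC p (-1) * (-η α) := by
    have e1 : ∀ s ∈ univ.erase (0 : ZMod p),
        (∑ u : ZMod p, quadCharC p u * quadCharC p (s - u)) * η (α - s)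
          = -quadCharC p (-1) * η (α - s) := by
      intro s hsmem
      rw [K_eval hp (Finset.mem_erase.mp hsmem).1]
    rw [Finset.sum_congr rfl e1, ← Finset.mul_sum,
      Finset.sum_erase_eq_sub (Finset.mem_univ (0 : ZMod p)), sum_shift η hη α,
      zero_sub, sub_zero]
  rw [hzero, hrest]
  ring

lemma sq_expand' (hp : p ≠ 2) {a : ZMod p} (ha : a ≠ 0) (g : ZMod p → ℂ) :
    ∑ x : ZMod p, g (a * x ^ 2) = ∑ t : ZMod p, (1 + quadCharC p a * quadCharC p t) * g t := by
  rw [sq_expand hp (fun u => g (a * u))]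
  refine Fintype.sum_equiv (Equiv.mulLeft₀ a⁻¹ (inv_ne_zero ha))
    (fun t => (1 + quadCharC p a * quadCharC p t) * g t)
    (fun u => (1 + quadCharC p u) * g (a * u)) ?_ |>.symm
  intro t
  simp only [Equiv.mulLeft₀_apply]
  have h1 : a * (a⁻¹ * t) = t := by field_simp
  have h2 : quadCharC p (a⁻¹ * t) = quadCharC p a * quadCharC p t := by
    rw [_root_.map_mul, quadCharC_inv hp]
  rw [h1, h2]

lemma G_eval (hp : p ≠ 2) (η : MulChar (ZMod p) ℂ) (hη : η ≠ 1)
    {a b : ZMod p} (ha : a ≠ 0) (hb : b ≠ 0) (α : ZMod p) :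
    ∑ x : ZMod p, ∑ y : ZMod p, η (α - a * x ^ 2 - b * y ^ 2)
      = (p : ℂ) * quadCharC p (-(a * b)) * η α := by
  classical
  have inner : ∀ x : ZMod p, ∑ y : ZMod p, η (α - a * x ^ 2 - b * y ^ 2)
      = ∑ t : ZMod p, (1 + quadCharC p b * quadCharC p t) * η (α - a * x ^ 2 - t) :=
    fun x => sq_expand' hp hb (fun t => η (α - a * x ^ 2 - t))
  rw [Finset.sum_congr rfl fun x _ => inner x, Finset.sum_comm]
  have inner2 : ∀ t : ZMod p,
      ∑ x : ZMod p, (1 + quadCharC p b * quadCharC p t) * η (α - a * x ^ 2 - t)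
        = (1 + quadCharC p b * quadCharC p t)
            * ∑ s : ZMod p, (1 + quadCharC p a * quadCharC p s) * η (α - t - s) := by
    intro t
    rw [← Finset.mul_sum]
    congr 1
    have e : ∀ x : ZMod p, η (α - a * x ^ 2 - t) = η ((α - t) - a * x ^ 2) := by
      intro x; congr 1; ring
    rw [Finset.sum_congr rfl fun x _ => e x, sq_expand' hp ha (fun s => η (α - t - s))]
  rw [Finset.sum_congr rfl fun t _ => inner2 t]
  -- expand the inner sum:  ∑ₛ (1 + χa χs) η(α-t-s) = χa * H (α - t)
  have innerH : ∀ t : ZMod p,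
      ∑ s : ZMod p, (1 + quadCharC p a * quadCharC p s) * η (α - t - s)
        = quadCharC p a * ∑ s : ZMod p, quadCharC p s * η (α - t - s) := by
    intro t
    have : ∀ s : ZMod p, (1 + quadCharC p a * quadCharC p s) * η (α - t - s)
        = η ((α - t) - s) + quadCharC p a * (quadCharC p s * η (α - t - s)) := by
      intro s
      have h : α - t - s = (α - t) - s := by ring
      rw [h]; ring
    rw [Finset.sum_congr rfl fun s _ => this s, Finset.sum_add_distrib,
      sum_shift η hη (α - t), zero_add, ← Finset.mul_sum]
  have expand : ∀ t : ZMod p,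
      (1 + quadCharC p b * quadCharC p t)
          * ∑ s : ZMod p, (1 + quadCharC p a * quadCharC p s) * η (α - t - s)
        = quadCharC p a * (∑ s : ZMod p, quadCharC p s * η (α - t - s))
          + quadCharC p a * quadCharC p b
            * (∑ s : ZMod p, quadCharC p t * quadCharC p s * η (α - t - s)) := by
    intro t
    rw [innerH t]
    rw [show ∑ s : ZMod p, quadCharC p t * quadCharC p s * η (α - t - s)
        = quadCharC p t * ∑ s : ZMod p, quadCharC p s * η (α - t - s) by
      rw [Finset.mul_sum]; exact Finset.sum_congr rfl fun s _ => by ring]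
    ring
  rw [Finset.sum_congr rfl fun t _ => expand t, Finset.sum_add_distrib,
    ← Finset.mul_sum, ← Finset.mul_sum]
  have hH0 : ∑ t : ZMod p, ∑ s : ZMod p, quadCharC p s * η (α - t - s) = 0 := by
    rw [Finset.sum_comm]
    have : ∀ s : ZMod p, ∑ t : ZMod p, quadCharC p s * η (α - t - s)
        = quadCharC p s * ∑ t : ZMod p, η ((α - s) - t) := by
      intro s
      rw [← Finset.mul_sum]
      congr 1
      refine Finset.sum_congr rfl fun t _ => ?_
      congr 1
      ring
    rw [Finset.sum_congr rfl fun s _ => this s]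
    simp [sum_shift η hη]
  rw [hH0, mul_zero, zero_add, J_eval hp η hη α]
  have : quadCharC p (-(a*b)) = quadCharC p a * quadCharC p b * quadCharC p (-1) := by
    rw [show -(a*b) = a * (b * -1) by ring, _root_.map_mul, _root_.map_mul]
    ring
  rw [this]
  ring

lemma sum_pi_succ {n : ℕ} (f : (Fin (n + 1) → ZMod p) → ℂ) :
    ∑ w : Fin (n + 1) → ZMod p, f w
      = ∑ x : ZMod p, ∑ w : Fin n → ZMod p, f (Fin.cons x w) := by
  rw [← Equiv.sum_comp (Fin.consEquiv (fun _ : Fin (n + 1) => ZMod p)) f,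
    Fintype.sum_prod_type]
  rfl

lemma T_eval (hp : p ≠ 2) (η : MulChar (ZMod p) ℂ) (hη : η ≠ 1) :
    ∀ (k : ℕ) (c : Fin (2 * k) → ZMod p), (∀ i, c i ≠ 0) → ∀ z : ZMod p,
    ∑ w : Fin (2 * k) → ZMod p, η (z - ∑ i, c i * w i ^ 2)
      = (p : ℂ) ^ k * quadCharC p ((-1) ^ k * ∏ i, c i) * η z := by
  intro k
  induction k with
  | zero =>
      intro c hc z
      simp [_root_.map_one]
  | succ k ih =>
      intro c hc z
      have step1 : ∀ x : ZMod p,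
          ∑ w : Fin (2 * k + 1) → ZMod p,
            η (z - ∑ i : Fin (2 * k + 1 + 1), c i * (Fin.cons (α := fun _ => ZMod p) x w) i ^ 2)
          = ∑ y : ZMod p, ∑ w : Fin (2 * k) → ZMod p,
            η (z - ∑ i : Fin (2 * k + 1 + 1), c i * (Fin.cons (α := fun _ => ZMod p) x (Fin.cons y w)) i ^ 2) := by
        intro x
        exact sum_pi_succ (n := 2 * k)
          (fun w : Fin (2 * k + 1) → ZMod p =>
            η (z - ∑ i : Fin (2 * k + 1 + 1), c i * (Fin.cons (α := fun _ => ZMod p) x w) i ^ 2))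
      set c' : Fin (2 * k) → ZMod p := fun i => c i.succ.succ with hc'
      have hq : ∀ (x y : ZMod p) (w : Fin (2 * k) → ZMod p),
          (z - ∑ i : Fin (2 * k + 1 + 1), c i * (Fin.cons (α := fun _ => ZMod p) x (Fin.cons y w)) i ^ 2)
            = (z - ∑ i, c' i * w i ^ 2) - c 0 * x ^ 2 - c 1 * y ^ 2 := by
        intro x y w
        rw [Fin.sum_univ_succ (f := fun i : Fin (2 * k + 1 + 1) =>
          c i * (Fin.cons (α := fun _ => ZMod p) x (Fin.cons y w)) i ^ 2)]
        rw [Fin.sum_univ_succ (f := fun i : Fin (2 * k + 1) =>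
          c i.succ * (Fin.cons (α := fun _ => ZMod p) x (Fin.cons y w)) i.succ ^ 2)]
        simp only [Fin.cons_zero, Fin.cons_succ]
        have h01 : ((0 : Fin (2 * k + 1)).succ : Fin (2 * k + 1 + 1)) = 1 := rfl
        rw [h01]
        ring
      have hc0 : c 0 ≠ 0 := hc 0
      have hc1 : c (1 : Fin (2 * k + 1 + 1)) ≠ 0 := hc 1
      have main : ∑ x : ZMod p, ∑ y : ZMod p, ∑ w : Fin (2 * k) → ZMod p,
            η (z - ∑ i : Fin (2 * k + 1 + 1), c i * (Fin.cons (α := fun _ => ZMod p) x (Fin.cons y w)) i ^ 2)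
          = (p : ℂ) ^ (k + 1)
              * quadCharC p ((-1) ^ (k + 1) * ∏ i : Fin (2 * k + 1 + 1), c i) * η z := by
        have e1 : ∀ x y : ZMod p, ∀ w : Fin (2 * k) → ZMod p,
            η (z - ∑ i : Fin (2 * k + 1 + 1), c i * (Fin.cons (α := fun _ => ZMod p) x (Fin.cons y w)) i ^ 2)
              = η ((z - ∑ i, c' i * w i ^ 2) - c 0 * x ^ 2 - c 1 * y ^ 2) := by
          intro x y w; rw [hq x y w]
        simp only [e1]
        have swap1 : ∀ x : ZMod p,
            ∑ y : ZMod p, ∑ w : Fin (2 * k) → ZMod p,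
              η ((z - ∑ i, c' i * w i ^ 2) - c 0 * x ^ 2 - c 1 * y ^ 2)
            = ∑ w : Fin (2 * k) → ZMod p, ∑ y : ZMod p,
              η ((z - ∑ i, c' i * w i ^ 2) - c 0 * x ^ 2 - c 1 * y ^ 2) :=
          fun x => Finset.sum_comm
        rw [Finset.sum_congr rfl fun x _ => swap1 x, Finset.sum_comm]
        have inner : ∀ w : Fin (2 * k) → ZMod p,
            ∑ x : ZMod p, ∑ y : ZMod p,
              η ((z - ∑ i, c' i * w i ^ 2) - c 0 * x ^ 2 - c 1 * y ^ 2)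
            = (p : ℂ) * quadCharC p (-(c 0 * c 1)) * η (z - ∑ i, c' i * w i ^ 2) :=
          fun w => G_eval hp η hη hc0 hc1 _
        rw [Finset.sum_congr rfl fun w _ => inner w, ← Finset.mul_sum,
          ih c' (fun i => hc _) z]
        have hprod : ∏ i : Fin (2 * k + 1 + 1), c i
            = c 0 * (c 1 * ∏ i : Fin (2 * k), c' i) := by
          rw [Fin.prod_univ_succ (f := fun i : Fin (2 * k + 1 + 1) => c i),
            Fin.prod_univ_succ (f := fun i : Fin (2 * k + 1) => c i.succ)]
          rfl
        rw [hprod]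
        have harg : ((-1 : ZMod p)) ^ (k + 1) * (c 0 * (c 1 * ∏ i : Fin (2 * k), c' i))
            = (-(c 0 * c 1)) * ((-1) ^ k * ∏ i : Fin (2 * k), c' i) := by ring
        rw [harg, _root_.map_mul (quadCharC p) (-(c 0 * c 1))
          ((-1) ^ k * ∏ i : Fin (2 * k), c' i)]
        ring
      exact (sum_pi_succ (n := 2 * k + 1)
        (fun w : Fin (2 * k + 1 + 1) → ZMod p => η (z - ∑ i, c i * w i ^ 2))).trans
        ((Finset.sum_congr rfl fun x _ => step1 x).trans main)

/-- The bordered symmetric matrix `[[Z, w],[wᵀ, z]]`. -/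
def bmat {m : ℕ} (Z : Matrix (Fin m) (Fin m) (ZMod p)) (w : Fin m → ZMod p) (z : ZMod p) :
    Matrix (Fin m ⊕ Unit) (Fin m ⊕ Unit) (ZMod p) :=
  Matrix.fromBlocks Z (Matrix.of fun i (_ : Unit) => w i)
    (Matrix.of fun (_ : Unit) j => w j) (Matrix.of fun _ _ => z)

lemma colU {m : ℕ} (U : Matrix (Fin m) (Fin m) (ZMod p)) (w : Fin m → ZMod p) :
    Uᵀ * (Matrix.of fun i (_ : Unit) => w i)
      = Matrix.of fun i (_ : Unit) => (Uᵀ *ᵥ w) i := by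
  ext i u
  simp [Matrix.mul_apply, Matrix.mulVec, dotProduct]

lemma rowU {m : ℕ} (U : Matrix (Fin m) (Fin m) (ZMod p)) (w : Fin m → ZMod p) :
    (Matrix.of fun (_ : Unit) j => w j) * U
      = Matrix.of fun (_ : Unit) j => (Uᵀ *ᵥ w) j := by
  ext u i
  simp [Matrix.mul_apply, Matrix.mulVec, dotProduct, Matrix.transpose_apply, mul_comm]

lemma bmat_congr {m : ℕ} (U Z : Matrix (Fin m) (Fin m) (ZMod p)) (w : Fin m → ZMod p)
    (z : ZMod p) :
    bmat (Uᵀ * Z * U) (Uᵀ *ᵥ w) z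
      = Matrix.fromBlocks Uᵀ 0 0 (1 : Matrix Unit Unit (ZMod p)) * bmat Z w z
          * Matrix.fromBlocks U 0 0 1 := by
  rw [bmat, bmat, Matrix.fromBlocks_multiply, Matrix.fromBlocks_multiply]
  rw [← colU, ← rowU]
  simp [Matrix.mul_assoc]

lemma det_bmat_congr {m : ℕ} (U Z : Matrix (Fin m) (Fin m) (ZMod p)) (w : Fin m → ZMod p)
    (z : ZMod p) :
    (bmat (Uᵀ * Z * U) (Uᵀ *ᵥ w) z).det = U.det ^ 2 * (bmat Z w z).det := by
  rw [bmat_congr, Matrix.det_mul, Matrix.det_mul, Matrix.det_fromBlocks_zero₂₁,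
    Matrix.det_fromBlocks_zero₂₁, Matrix.det_transpose, Matrix.det_one]
  ring

lemma sum_bmat_congr (η : MulChar (ZMod p) ℂ) {m : ℕ}
    (U Z : Matrix (Fin m) (Fin m) (ZMod p)) (hU : IsUnit U.det) (z : ZMod p) :
    ∑ w : Fin m → ZMod p, η ((bmat (Uᵀ * Z * U) w z).det)
      = η U.det ^ 2 * ∑ w : Fin m → ZMod p, η ((bmat Z w z).det) := by
  have hUT : IsUnit (Uᵀ).det := by rwa [Matrix.det_transpose]
  have hbij : Function.Bijective (fun w : Fin m → ZMod p => Uᵀ *ᵥ w) := by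
    constructor
    · intro w1 w2 h
      have h2 := congrArg (fun v => (Uᵀ)⁻¹ *ᵥ v) h
      simpa [Matrix.mulVec_mulVec, Matrix.nonsing_inv_mul _ hUT, Matrix.one_mulVec] using h2
    · intro v
      refine ⟨(Uᵀ)⁻¹ *ᵥ v, ?_⟩
      show Uᵀ *ᵥ ((Uᵀ)⁻¹ *ᵥ v) = v
      rw [Matrix.mulVec_mulVec, Matrix.mul_nonsing_inv _ hUT, Matrix.one_mulVec]
  rw [← hbij.sum_comp (fun w => η ((bmat (Uᵀ * Z * U) w z).det))]
  have key : ∀ w : Fin m → ZMod p,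
      η ((bmat (Uᵀ * Z * U) (Uᵀ *ᵥ w) z).det) = η U.det ^ 2 * η ((bmat Z w z).det) := by
    intro w
    rw [det_bmat_congr, _root_.map_mul, _root_.map_pow]
  rw [Finset.sum_congr rfl fun w _ => key w, ← Finset.mul_sum]

lemma det_bmat_diagonal {m : ℕ} (d : Fin m → ZMod p) (hd : ∀ i, d i ≠ 0)
    (w : Fin m → ZMod p) (z : ZMod p) :
    (bmat (Matrix.diagonal d) w z).det
      = (∏ i, d i) * (z - ∑ i, (d i)⁻¹ * w i ^ 2) := by
  have hdet : IsUnit (Matrix.diagonal d).det := by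
    rw [Matrix.det_diagonal]
    exact isUnit_iff_ne_zero.mpr (Finset.prod_ne_zero_iff.mpr fun i _ => hd i)
  have hinvble : Invertible (Matrix.diagonal d) := (Matrix.diagonal d).invertibleOfIsUnitDet hdet
  rw [bmat, Matrix.det_fromBlocks₁₁, Matrix.det_diagonal]
  congr 1
  have hinv : ⅟(Matrix.diagonal d) = Matrix.diagonal (fun i => (d i)⁻¹) := by
    refine invOf_eq_right_inv ?_
    rw [Matrix.diagonal_mul_diagonal]
    have h : (fun i => d i * (d i)⁻¹) = fun _ : Fin m => (1 : ZMod p) := by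
      funext i
      exact mul_inv_cancel₀ (hd i)
    rw [h, Matrix.diagonal_one]
  rw [hinv, Matrix.det_unique]
  simp only [Matrix.sub_apply, Matrix.of_apply, Matrix.mul_apply, Matrix.diagonal_apply,
    mul_ite, mul_zero, Finset.sum_ite_eq', Finset.mem_univ, if_true]
  congr 1
  refine Finset.sum_congr rfl fun j _ => ?_
  ring

lemma diag_sum (hp : p ≠ 2) (η : MulChar (ZMod p) ℂ) (hη2 : η ^ 2 ≠ 1) (k : ℕ)
    (d : Fin (2 * k) → ZMod p) (z : ZMod p) :
    ∑ w : Fin (2 * k) → ZMod p, η ((bmat (Matrix.diagonal d) w z).det)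
      = (p : ℂ) ^ k * quadCharC p ((-1) ^ k * ∏ i, d i) * η ((∏ i, d i) * z) := by
  have hη1 : η ≠ 1 := fun h => hη2 (by rw [h, one_pow])
  by_cases hd : ∀ i, d i ≠ 0
  · rw [Finset.sum_congr rfl fun w _ => congrArg η (det_bmat_diagonal d hd w z)]
    simp only [_root_.map_mul]
    rw [← Finset.mul_sum,
      T_eval hp η hη1 k (fun i => (d i)⁻¹) (fun i => inv_ne_zero (hd i)) z]
    have h1 : ∏ i, (d i)⁻¹ = (∏ i, d i)⁻¹ := by
      rw [← Finset.prod_inv_distrib]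
    rw [h1, _root_.map_mul (quadCharC p) ((-1 : ZMod p) ^ k) (∏ i, d i)⁻¹,
      quadCharC_inv hp (∏ i, d i)]
    ring
  · push_neg at hd
    obtain ⟨i0, hi0⟩ := hd
    have hprod : ∏ i, d i = 0 := Finset.prod_eq_zero (Finset.mem_univ i0) hi0
    rw [hprod, mul_zero, MulChar.map_zero, mul_zero, zero_mul]
    obtain ⟨a, ha⟩ := MulChar.ne_one_iff.mp hη2
    have ha2 : η ((a : (ZMod p)ˣ) : ZMod p) ^ 2 ≠ 1 := by
      intro h
      apply ha
      have : (η ^ 2) ((a : (ZMod p)ˣ) : ZMod p) = η ((a : (ZMod p)ˣ) : ZMod p) ^ 2 := by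
        rw [sq, MulChar.mul_apply, sq]
      rw [this, h]
    set U : Matrix (Fin (2 * k)) (Fin (2 * k)) (ZMod p) :=
      Matrix.diagonal (fun i => if i = i0 then ((a : (ZMod p)ˣ) : ZMod p) else 1) with hU
    have hUdet : U.det = ((a : (ZMod p)ˣ) : ZMod p) := by
      rw [hU, Matrix.det_diagonal, Finset.prod_ite_eq' Finset.univ i0
        (fun _ => ((a : (ZMod p)ˣ) : ZMod p))]
      simp
    have hUZU : Uᵀ * Matrix.diagonal d * U = Matrix.diagonal d := by
      rw [hU, Matrix.diagonal_transpose, Matrix.diagonal_mul_diagonal,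
        Matrix.diagonal_mul_diagonal]
      refine congrArg Matrix.diagonal (funext fun i => ?_)
      by_cases h : i = i0
      · subst h; simp [hi0]
      · simp [h]
    have hUnit : IsUnit U.det := by rw [hUdet]; exact a.isUnit
    have hcong := sum_bmat_congr η U (Matrix.diagonal d) hUnit z
    rw [hUZU, hUdet] at hcong
    have hzero : (1 - η ((a : (ZMod p)ˣ) : ZMod p) ^ 2)
        * ∑ w : Fin (2 * k) → ZMod p, η ((bmat (Matrix.diagonal d) w z).det) = 0 := by
      linear_combination hcong
    rcases mul_eq_zero.mp hzero with h | h
    · exact absurd (by linear_combination -h) ha2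
    · exact h

lemma main_aux (hp : p ≠ 2) (η : MulChar (ZMod p) ℂ) (hη2 : η ^ 2 ≠ 1)
    (m k : ℕ) (hm : m = 2 * k) (Z₁ : Matrix (Fin m) (Fin m) (ZMod p)) (hZ₁ : Z₁ᵀ = Z₁)
    (z : ZMod p) :
    ∑ w : Fin m → ZMod p, η ((bmat Z₁ w z).det)
      = (p : ℂ) ^ k * quadCharC p ((-1) ^ k * Z₁.det) * η (Z₁.det * z) := by
  subst hm
  have h2 : Invertible (2 : ZMod p) :=
    invertibleOfNonzero (Ring.two_ne_zero (ringChar_ne_two hp))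
  set B := Matrix.toBilin' Z₁ with hB
  have hZe : ∀ i j, Z₁ j i = Z₁ i j := fun i j => congrFun (congrFun hZ₁ i) j
  have hsymm : LinearMap.IsSymm B := by
    rw [LinearMap.isSymm_def]; intro x y
    rw [RingHom.id_apply, hB, Matrix.toBilin'_apply, Matrix.toBilin'_apply, Finset.sum_comm]
    refine Finset.sum_congr rfl fun i _ => Finset.sum_congr rfl fun j _ => ?_
    rw [hZe i j]
    ring
  obtain ⟨v, hv⟩ := LinearMap.BilinForm.exists_orthogonal_basis hsymm
  have hrank : Module.finrank (ZMod p) (Fin (2 * k) → ZMod p) = 2 * k :=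
    Module.finrank_fin_fun (ZMod p)
  set v' : Module.Basis (Fin (2 * k)) (ZMod p) (Fin (2 * k) → ZMod p) := v.reindex (finCongr hrank)
    with hv'def
  have hv' : B.IsOrthoᵢ v' := by
    intro i j hij
    have h := hv (i := (finCongr hrank).symm i) (j := (finCongr hrank).symm j)
      (fun h => hij (by simpa using congrArg (finCongr hrank) h))
    simpa [Function.onFun, LinearMap.IsOrtho, hv'def, Module.Basis.reindex_apply] using h
  set P := (Pi.basisFun (ZMod p) (Fin (2 * k))).toMatrix v' with hPdef
  have hinvP : Invertible P := (Pi.basisFun (ZMod p) (Fin (2 * k))).invertibleToMatrix v'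
  have hP : IsUnit P.det := (Matrix.isUnit_iff_isUnit_det P).mp (isUnit_of_invertible P)
  have hkey : Pᵀ * Z₁ * P = LinearMap.BilinForm.toMatrix v' B := by
    have h1 : LinearMap.BilinForm.toMatrix (Pi.basisFun (ZMod p) (Fin (2 * k))) B = Z₁ := by
      rw [LinearMap.BilinForm.toMatrix_basisFun, hB, LinearMap.BilinForm.toMatrix'_toBilin']
    rw [← h1, hPdef]
    exact LinearMap.BilinForm.toMatrix_mul_basis_toMatrix _ v' B
  set d : Fin (2 * k) → ZMod p := fun i => B (v' i) (v' i) with hd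
  have hdiag : LinearMap.BilinForm.toMatrix v' B = Matrix.diagonal d := by
    ext i j
    by_cases hij : i = j
    · subst hij
      rw [LinearMap.BilinForm.toMatrix_apply, Matrix.diagonal_apply_eq]
    · rw [LinearMap.BilinForm.toMatrix_apply, Matrix.diagonal_apply_ne _ hij]
      exact hv' hij
  have hcong := sum_bmat_congr η P Z₁ hP z
  rw [hkey, hdiag, diag_sum hp η hη2 k d z] at hcong
  have hdd : ∏ i, d i = P.det ^ 2 * Z₁.det := by
    have h0 : (Matrix.diagonal d).det = ∏ i, d i := Matrix.det_diagonal
    rw [← h0, ← hdiag, ← hkey, Matrix.det_mul, Matrix.det_mul, Matrix.det_transpose]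
    ring
  rw [hdd] at hcong
  have hPdet : P.det ≠ 0 := hP.ne_zero
  have hchi : quadCharC p ((-1 : ZMod p) ^ k * (P.det ^ 2 * Z₁.det))
      = quadCharC p (P.det ^ 2) * quadCharC p ((-1 : ZMod p) ^ k * Z₁.det) := by
    rw [show ((-1 : ZMod p)) ^ k * (P.det ^ 2 * Z₁.det)
        = P.det ^ 2 * ((-1 : ZMod p) ^ k * Z₁.det) by ring, _root_.map_mul]
  have heta : η (P.det ^ 2 * Z₁.det * z) = η P.det ^ 2 * η (Z₁.det * z) := by
    rw [show P.det ^ 2 * Z₁.det * z = P.det ^ 2 * (Z₁.det * z) by ring, _root_.map_mul,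
      _root_.map_pow]
  rw [hchi, quadCharC_sq_one' hp hPdet, one_mul, heta] at hcong
  have hne : η P.det ^ 2 ≠ 0 := pow_ne_zero _ (hP.map η).ne_zero
  apply mul_left_cancel₀ hne
  rw [← hcong]
  ring

end CharSumAux

/-- Proposition 5.4 (2): for `p` an odd prime, `η` with `η² ≠ 1`, and `l` odd,
`∑_{w ∈ F_p^{l-1}} η(det [[Z₁, w],[wᵀ, z]])
  = p^((l-1)/2) φ((-1)^((l-1)/2) det Z₁) η(det Z₁ · z)`. -/
theorem charSum_borderedDet_odd (p l : ℕ) [Fact p.Prime] (hp : p ≠ 2)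
    (η : MulChar (ZMod p) ℂ) (hη : η ^ 2 ≠ 1) (hl : Odd l)
    (Z₁ : Matrix (Fin (l - 1)) (Fin (l - 1)) (ZMod p)) (hZ₁ : Z₁ᵀ = Z₁) (z : ZMod p) :
    (∑ w : Fin (l - 1) → ZMod p,
        η ((Matrix.fromBlocks Z₁ (Matrix.of fun i (_ : Unit) => w i)
            (Matrix.of fun (_ : Unit) j => w j) (Matrix.of fun _ _ => z)).det)) =
      (p : ℂ) ^ ((l - 1) / 2) *
        quadCharC p ((-1 : ZMod p) ^ ((l - 1) / 2) * Z₁.det) * η (Z₁.det * z) := by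
  obtain ⟨t, ht⟩ := hl
  have h1 : l - 1 = 2 * t := by omega
  have h2 : (l - 1) / 2 = t := by omega
  rw [h2]
  exact CharSumAux.main_aux hp η hη (l - 1) t h1 Z₁ hZ₁ z
end

section
/- Let p be an odd prime, m a positive integer, and χ a primitive Dirichlet character mod p. Let l = gcd(m, p-1) and u₀ a primitive l-th root of unity mod p. Let A ∈ S_m(F_p) and define K(A) = Σ_{c ∈ F_p} χ(c) · #{Z ∈ S_m(F_p) : det Z = 1 and tr(AZ) = c} (with the count taken of the appropriate twisted set M_p(A,c)). If χ(u₀) ≠ 1, then Σ_{c∈F_p^×} χ(c)·#M_p(A,c) = 0, where M_p(A,c) = {Z ∈ S_m(F_p) : det Z = 1, tr(AZ) = c}. -/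
open Matrix Finset

/-- Part of the proof of Theorem 5.5 (1): for `p` an odd prime, `χ` a nontrivial
(primitive) character mod `p`, `l = gcd(m, p-1)`, and `u₀` a primitive `l`-th root of
unity mod `p` with `χ(u₀) ≠ 1`, the twisted count
`∑_{c ∈ F_p^×} χ(c) · #{Z ∈ S_m(F_p) : det Z = 1, tr(AZ) = c}` vanishes. -/
theorem twisted_count_vanishes (p m : ℕ) [Fact p.Prime] (hp : p ≠ 2) (hm : 0 < m)
    (χ : MulChar (ZMod p) ℂ) (hχ : χ ≠ 1) (u₀ : (ZMod p)ˣ)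
    (hu₀ : orderOf u₀ = Nat.gcd m (p - 1)) (hχu₀ : χ (u₀ : ZMod p) ≠ 1)
    (A : Matrix (Fin m) (Fin m) (ZMod p)) (hA : Aᵀ = A) :
    (∑ c ∈ Finset.univ.erase (0 : ZMod p),
        χ c * ((Finset.univ.filter (fun Z : Matrix (Fin m) (Fin m) (ZMod p) =>
          Zᵀ = Z ∧ Z.det = 1 ∧ (A * Z).trace = c)).card : ℂ)) = 0 := by
  set N : ZMod p → ℕ := fun c => (Finset.univ.filter (fun Z : Matrix (Fin m) (Fin m) (ZMod p) =>
          Zᵀ = Z ∧ Z.det = 1 ∧ (A * Z).trace = c)).card with hN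
  have hu0m : ((u₀ : ZMod p)) ^ m = 1 := by
    have h1 : orderOf u₀ ∣ m := hu₀ ▸ Nat.gcd_dvd_left m (p - 1)
    have h2 : u₀ ^ m = 1 := orderOf_dvd_iff_pow_eq_one.mp h1
    rw [← Units.val_pow_eq_pow_val, h2, Units.val_one]
  have hum : u₀ ^ m = 1 := orderOf_dvd_iff_pow_eq_one.mp (hu₀ ▸ Nat.gcd_dvd_left m (p - 1))
  have hinv : ((u₀⁻¹ : (ZMod p)ˣ) : ZMod p) * (u₀ : ZMod p) = 1 := by
    rw [← Units.val_mul, inv_mul_cancel, Units.val_one]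
  have hinvm : ((u₀⁻¹ : (ZMod p)ˣ) : ZMod p) ^ m = 1 := by
    rw [← Units.val_pow_eq_pow_val, inv_pow, hum, inv_one, Units.val_one]
  have hNeq : ∀ c : ZMod p, N ((u₀ : ZMod p) * c) = N c := by
    intro c
    symm
    apply Finset.card_bij (fun Z _ => (u₀ : ZMod p) • Z)
    · intro Z hZ
      simp only [Finset.mem_filter, Finset.mem_univ, true_and] at hZ ⊢
      obtain ⟨h1, h2, h3⟩ := hZ
      refine ⟨by rw [Matrix.transpose_smul, h1], ?_, ?_⟩
      · rw [Matrix.det_smul, h2, Fintype.card_fin, hu0m, mul_one]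
      · rw [Matrix.mul_smul, Matrix.trace_smul, h3, smul_eq_mul]
    · intro Z₁ h₁ Z₂ h₂ h
      have := congrArg (fun M => ((u₀⁻¹ : (ZMod p)ˣ) : ZMod p) • M) h
      simpa only [smul_smul, hinv, one_smul] using this
    · intro W hW
      refine ⟨((u₀⁻¹ : (ZMod p)ˣ) : ZMod p) • W, ?_, by
        rw [smul_smul, ← Units.val_mul, mul_inv_cancel, Units.val_one, one_smul]⟩
      simp only [Finset.mem_filter, Finset.mem_univ, true_and] at hW ⊢
      obtain ⟨h1, h2, h3⟩ := hW
      refine ⟨by rw [Matrix.transpose_smul, h1], ?_, ?_⟩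
      · rw [Matrix.det_smul, h2, Fintype.card_fin, mul_one, hinvm]
      · rw [Matrix.mul_smul, Matrix.trace_smul, h3, smul_eq_mul, ← mul_assoc, hinv, one_mul]
  have hχ0 : χ (0 : ZMod p) = 0 := by
    apply MulChar.map_nonunit
    simp [isUnit_iff_ne_zero]
  have hfull : (∑ c ∈ Finset.univ.erase (0 : ZMod p), χ c * (N c : ℂ))
      = ∑ c : ZMod p, χ c * (N c : ℂ) := by
    rw [← Finset.sum_erase_add _ _ (Finset.mem_univ (0 : ZMod p)), hχ0, zero_mul, add_zero]
  set S := ∑ c : ZMod p, χ c * (N c : ℂ) with hS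
  have hbij : Function.Bijective (fun c : ZMod p => (u₀ : ZMod p) * c) :=
    (Units.mulLeft u₀).bijective
  have key : S = χ (u₀ : ZMod p) * S := by
    calc S = ∑ c : ZMod p, χ ((u₀ : ZMod p) * c) * (N ((u₀ : ZMod p) * c) : ℂ) := by
            rw [hS]; exact (Fintype.sum_bijective _ hbij _ _ (fun c => rfl)).symm
    _ = ∑ c : ZMod p, χ (u₀ : ZMod p) * (χ c * (N c : ℂ)) := by
            refine Finset.sum_congr rfl fun c _ => ?_
            rw [hNeq, _root_.map_mul χ, mul_assoc]
    _ = χ (u₀ : ZMod p) * S := by rw [← Finset.mul_sum]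
  have : (χ (u₀ : ZMod p) - 1) * S = 0 := by ring_nf; linear_combination -key
  rw [hfull]
  rcases mul_eq_zero.mp this with h | h
  · exact absurd (sub_eq_zero.mp h) hχu₀
  · exact h
end

section
/- Let p be an odd prime, m an even positive integer, and χ a multiplicative character of F_p with χ ≠ 1 (extended by χ(0)=0). If A is a symmetric m×m matrix over F_p with det A = 0, then Σ_{X ∈ SL_m(F_p)} χ(tr(Xᵀ A X)) = 0. -/
open Matrix Finset

variable {p m : ℕ} [Fact p.Prime]

private lemma sumL (χ : MulChar (ZMod p) ℂ) (A U : Matrix (Fin m) (Fin m) (ZMod p))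
    (hUd : U.det ≠ 0) (hUA : Uᵀ * A * U = A) (d : ZMod p) :
    (∑ X ∈ Finset.univ.filter (fun X : Matrix (Fin m) (Fin m) (ZMod p) => X.det = d),
        χ ((Xᵀ * A * X).trace))
    = ∑ X ∈ Finset.univ.filter
        (fun X : Matrix (Fin m) (Fin m) (ZMod p) => X.det = U.det * d),
        χ ((Xᵀ * A * X).trace) := by
  have hU : IsUnit U.det := isUnit_iff_ne_zero.mpr hUd
  refine Finset.sum_nbij' (fun X => U * X) (fun X => U⁻¹ * X) ?_ ?_ ?_ ?_ ?_
  · intro a ha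
    simp only [mem_filter, mem_univ, true_and] at ha ⊢
    rw [det_mul, ha]
  · intro a ha
    simp only [mem_filter, mem_univ, true_and] at ha ⊢
    rw [det_mul, ha, det_nonsing_inv, Ring.inverse_eq_inv', ← mul_assoc,
      inv_mul_cancel₀ hUd, one_mul]
  · intro a _
    show U⁻¹ * (U * a) = a
    rw [← mul_assoc, nonsing_inv_mul U hU, one_mul]
  · intro a _
    show U * (U⁻¹ * a) = a
    rw [← mul_assoc, mul_nonsing_inv U hU, one_mul]
  · intro a _
    congr 2
    have : (U * a)ᵀ * A * (U * a) = aᵀ * (Uᵀ * A * U) * a := by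
      rw [transpose_mul]; simp only [Matrix.mul_assoc]
    rw [this, hUA]

private lemma sumR (χ : MulChar (ZMod p) ℂ) (A U : Matrix (Fin m) (Fin m) (ZMod p))
    (hUd : U.det ≠ 0) (α : ZMod p) (hUU : U * Uᵀ = α • (1 : Matrix (Fin m) (Fin m) (ZMod p)))
    (d : ZMod p) :
    (∑ X ∈ Finset.univ.filter
        (fun X : Matrix (Fin m) (Fin m) (ZMod p) => X.det = U.det * d),
        χ ((Xᵀ * A * X).trace))
    = χ α * ∑ X ∈ Finset.univ.filter
        (fun X : Matrix (Fin m) (Fin m) (ZMod p) => X.det = d),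
        χ ((Xᵀ * A * X).trace) := by
  have hU : IsUnit U.det := isUnit_iff_ne_zero.mpr hUd
  rw [Finset.mul_sum]
  refine (Finset.sum_nbij' (fun X => X * U) (fun X => X * U⁻¹) ?_ ?_ ?_ ?_ ?_).symm
  · intro a ha
    simp only [mem_filter, mem_univ, true_and] at ha ⊢
    rw [det_mul, ha, mul_comm]
  · intro a ha
    simp only [mem_filter, mem_univ, true_and] at ha ⊢
    rw [det_mul, ha, det_nonsing_inv, Ring.inverse_eq_inv', mul_comm U.det d,
      mul_assoc, mul_inv_cancel₀ hUd, mul_one]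
  · intro a _
    show a * U * U⁻¹ = a
    rw [mul_assoc, mul_nonsing_inv U hU, mul_one]
  · intro a _
    show a * U⁻¹ * U = a
    rw [mul_assoc, nonsing_inv_mul U hU, mul_one]
  · intro a _
    have h1 : ((a * U)ᵀ * A * (a * U)).trace = α * ((aᵀ * A * a)).trace := by
      rw [transpose_mul]
      have : Uᵀ * aᵀ * A * (a * U) = Uᵀ * ((aᵀ * A * a) * U) := by
        simp only [Matrix.mul_assoc]
      rw [this, Matrix.trace_mul_comm, Matrix.mul_assoc, hUU, Matrix.mul_smul,
        Matrix.mul_one, Matrix.trace_smul, smul_eq_mul]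
    rw [h1, _root_.map_mul]
/-- For singular symmetric `A`, there is `U` with `UᵀAU = A` and any prescribed determinant. -/
private lemma exU (A : Matrix (Fin m) (Fin m) (ZMod p)) (hA : Aᵀ = A) (hAdet : A.det = 0)
    (c : ZMod p) : ∃ U : Matrix (Fin m) (Fin m) (ZMod p), Uᵀ * A * U = A ∧ U.det = c := by
  obtain ⟨v, hv0, hv⟩ := (Matrix.exists_mulVec_eq_zero_iff).mpr hAdet
  obtain ⟨i, hi⟩ := Function.ne_iff.mp hv0
  simp only [Pi.zero_apply] at hi
  set k : ZMod p := (c - 1) * (v i)⁻¹ with hk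
  set S : Matrix (Fin m) (Fin m) (ZMod p) := vecMulVec v (Pi.single i 1) with hS
  have hAS : A * S = 0 := by
    ext a b
    have e1 : ∀ x, A a x * (v x * (Pi.single i 1 : Fin m → ZMod p) b)
        = (A a x * v x) * (Pi.single i 1 : Fin m → ZMod p) b := fun x => by ring
    simp only [Matrix.mul_apply, hS, vecMulVec_apply, Matrix.zero_apply, e1,
      ← Finset.sum_mul]
    have : (∑ x, A a x * v x) = (A *ᵥ v) a := rfl
    rw [this, hv]
    simp
  have hSA : Sᵀ * A = 0 := by
    have hvA : v ᵥ* A = 0 := by rw [← Matrix.mulVec_transpose, hA, hv]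
    ext a b
    have e2 : ∀ x, v x * (Pi.single i 1 : Fin m → ZMod p) a * A x b
        = (Pi.single i 1 : Fin m → ZMod p) a * (v x * A x b) := fun x => by ring
    simp only [Matrix.mul_apply, hS, Matrix.transpose_apply, vecMulVec_apply,
      Matrix.zero_apply, e2, ← Finset.mul_sum]
    have : (∑ x, v x * A x b) = (v ᵥ* A) b := rfl
    rw [this, hvA]
    simp
  refine ⟨1 + k • S, ?_, ?_⟩
  · have h1 : A * (1 + k • S) = A := by
      rw [Matrix.mul_add, Matrix.mul_one, Matrix.mul_smul, hAS, smul_zero, add_zero]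
    have h2 : (1 + k • S)ᵀ * A = A := by
      rw [Matrix.transpose_add, Matrix.transpose_one, Matrix.transpose_smul,
        Matrix.add_mul, Matrix.one_mul, Matrix.smul_mul, hSA, smul_zero, add_zero]
    rw [Matrix.mul_assoc, h1, h2]
  · have hcol : 1 + k • S
        = Matrix.updateCol (1 : Matrix (Fin m) (Fin m) (ZMod p)) i
            (fun a => (1 : Matrix (Fin m) (Fin m) (ZMod p)) a i + k * v a) := by
      ext a b
      by_cases hbi : b = i
      · subst hbi
        simp only [Matrix.add_apply, Matrix.smul_apply, hS, vecMulVec_apply,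
          Matrix.updateCol_apply, if_pos rfl, Pi.single_eq_same, smul_eq_mul,
          ite_true, eq_self_iff_true]
        ring
      · simp [hS, vecMulVec_apply, Matrix.updateCol_apply, hbi, Pi.single_apply]
    rw [hcol, ← Matrix.cramer_apply, Matrix.cramer_one]
    show (1 : Matrix (Fin m) (Fin m) (ZMod p)) i i + k * v i = c
    rw [Matrix.one_apply_eq, hk, mul_assoc, inv_mul_cancel₀ hi, mul_one]
    ring
private lemma exU0 (hm : Even m) (α : ZMod p) :
    ∃ U : Matrix (Fin m) (Fin m) (ZMod p),
      U * Uᵀ = α • (1 : Matrix (Fin m) (Fin m) (ZMod p)) := by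
  obtain ⟨a, b, hab⟩ := ZMod.sq_add_sq p α
  obtain ⟨k, hk⟩ := hm
  let e : Fin 2 × Fin k ≃ Fin m := finProdFinEquiv.trans (finCongr (by omega))
  set B : Matrix (Fin 2) (Fin 2) (ZMod p) := !![a, b; -b, a] with hBdef
  have hB : B * Bᵀ = α • (1 : Matrix (Fin 2) (Fin 2) (ZMod p)) := by
    have ht : Bᵀ = !![a, -b; b, a] := by
      rw [hBdef]; ext i j; fin_cases i <;> fin_cases j <;> simp
    rw [hBdef, ht, Matrix.mul_fin_two]
    ext i j
    fin_cases i <;> fin_cases j <;> simp [Matrix.one_apply, ← hab] <;> ring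
  refine ⟨Matrix.reindex e e (Matrix.blockDiagonal fun _ : Fin k => B), ?_⟩
  rw [Matrix.transpose_reindex, Matrix.reindex_apply, Matrix.reindex_apply,
    Matrix.submatrix_mul_equiv, Matrix.blockDiagonal_transpose,
    ← Matrix.blockDiagonal_mul]
  have h2 : (fun _ : Fin k => B * Bᵀ)
      = α • (fun _ : Fin k => (1 : Matrix (Fin 2) (Fin 2) (ZMod p))) :=
    funext fun _ => hB
  rw [h2, Matrix.blockDiagonal_smul,
    show (fun _ : Fin k => (1 : Matrix (Fin 2) (Fin 2) (ZMod p)))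
      = (1 : Fin k → Matrix (Fin 2) (Fin 2) (ZMod p)) from rfl,
    Matrix.blockDiagonal_one]
  ext i j
  simp [Matrix.submatrix_apply, Matrix.one_apply, Equiv.symm_apply_eq]

/-- Part of the proof of Theorem 5.5: for `p` an odd prime, `m` even, `χ` a nontrivial
multiplicative character of `F_p`, and `A` a singular symmetric `m × m` matrix over
`F_p`, the sum `h(A,χ) = ∑_{X ∈ SL_m(F_p)} χ(tr(Xᵀ A X))` vanishes. -/
theorem h_sum_vanishes_of_singular (p m : ℕ) [Fact p.Prime] (hp : p ≠ 2) (hm : Even m)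
    (hm0 : 0 < m) (χ : MulChar (ZMod p) ℂ) (hχ : χ ≠ 1)
    (A : Matrix (Fin m) (Fin m) (ZMod p)) (hA : Aᵀ = A) (hAdet : A.det = 0) :
    (∑ X ∈ Finset.univ.filter (fun X : Matrix (Fin m) (Fin m) (ZMod p) => X.det = 1),
        χ ((Xᵀ * A * X).trace)) = 0 := by
  obtain ⟨u, hu⟩ := MulChar.ne_one_iff.mp hχ
  set α : ZMod p := (u : ZMod p) with hα
  have hα0 : α ≠ 0 := Units.ne_zero u
  obtain ⟨U₀, hU₀⟩ := exU0 hm α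
  have hU₀d : U₀.det ≠ 0 := by
    intro h
    have : (U₀ * U₀ᵀ).det = 0 := by rw [Matrix.det_mul, h, zero_mul]
    rw [hU₀, Matrix.det_smul, Matrix.det_one, mul_one, Fintype.card_fin] at this
    exact hα0 (pow_eq_zero_iff hm0.ne' |>.mp this)
  obtain ⟨U, hUA, hUdet⟩ := exU A hA hAdet U₀.det
  have hUd : U.det ≠ 0 := hUdet ▸ hU₀d
  have h1 := sumL χ A U hUd hUA 1
  have h2 := sumR χ A U₀ hU₀d α hU₀ 1
  rw [mul_one, hUdet] at h1
  rw [mul_one] at h2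
  have key : (∑ X ∈ Finset.univ.filter
      (fun X : Matrix (Fin m) (Fin m) (ZMod p) => X.det = 1),
      χ ((Xᵀ * A * X).trace))
      = χ α * ∑ X ∈ Finset.univ.filter
      (fun X : Matrix (Fin m) (Fin m) (ZMod p) => X.det = 1),
      χ ((Xᵀ * A * X).trace) := h1.trans h2
  by_contra hne
  exact hu (mul_right_cancel₀ hne (by rw [one_mul]; exact key)).symm
end
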